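/- Let k ≥ 1 and let a : Fin (2k) → ℕ with a i > 0 for all i. In R = MvPolynomial (Fin 2) ℤ write x = X 0 and y = X 1, let ι = Fin (2k) ⊕ Fin 2, and define v : ι → R by v (inl i) = (a i) · x and v (inr j) = y for both j. Then the following are equivalent: (1) there exist a finite partition π of ι into nonempty blocks and a block B₀ ∈ π such that ∏_{j ∈ B₀} v j = ∑_{B ∈ π, B ≠ B₀} ∏_{j ∈ B} v j; (2) there exists S : Finset (Fin (2k)) with S.card = k and ∏_{i ∈ S} a i = ∏_{i ∉ S} a i. -/

import Mathlib

open Finset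

theorem stmt_4 (k : ℕ) (hk : 1 ≤ k) (a : Fin (2 * k) → ℕ) (ha : ∀ i, 0 < a i)
    (v : Fin (2 * k) ⊕ Fin 2 → MvPolynomial (Fin 2) ℤ)
    (hv1 : ∀ i, v (Sum.inl i) = (a i : MvPolynomial (Fin 2) ℤ) * MvPolynomial.X 0)
    (hv2 : ∀ j, v (Sum.inr j) = MvPolynomial.X 1) :
    (∃ π : Finpartition (Finset.univ : Finset (Fin (2 * k) ⊕ Fin 2)),
      ∃ B₀ ∈ π.parts, ∏ j ∈ B₀, v j = ∑ B ∈ π.parts.erase B₀, ∏ j ∈ B, v j) ↔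
    (∃ S : Finset (Fin (2 * k)), S.card = k ∧ ∏ i ∈ S, a i = ∏ i ∈ Sᶜ, a i) := by
  classical
  set d : Finset (Fin (2 * k) ⊕ Fin 2) → (Fin 2 →₀ ℕ) :=
    fun B => Finsupp.single 0 B.toLeft.card + Finsupp.single 1 B.toRight.card with hd
  set c : Finset (Fin (2 * k) ⊕ Fin 2) → ℤ :=
    fun B => ∏ i ∈ B.toLeft, (a i : ℤ) with hc
  have hcpos : ∀ B, 0 < c B := fun B =>
    Finset.prod_pos (fun i _ => by exact_mod_cast ha i)
  have key : ∀ B : Finset (Fin (2 * k) ⊕ Fin 2),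
      ∏ j ∈ B, v j = MvPolynomial.monomial (d B) (c B) := by
    intro B
    conv_lhs => rw [← B.toLeft_disjSum_toRight]
    rw [Finset.prod_disjSum]
    simp only [hv1, hv2]
    rw [Finset.prod_mul_distrib, Finset.prod_const, Finset.prod_const]
    have h1 : ∏ i ∈ B.toLeft, ((a i : ℕ) : MvPolynomial (Fin 2) ℤ)
        = MvPolynomial.C (c B) := by
      rw [hc, map_prod]
      exact Finset.prod_congr rfl fun i _ => by rw [eq_intCast]; push_cast; ring
    rw [h1, MvPolynomial.X_pow_eq_monomial, MvPolynomial.X_pow_eq_monomial,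
      MvPolynomial.C_mul_monomial, MvPolynomial.monomial_mul, mul_one, mul_one]
  -- counting sums over a partition
  have hsum : ∀ (π : Finpartition (Finset.univ : Finset (Fin (2 * k) ⊕ Fin 2)))
      (g : Fin (2 * k) ⊕ Fin 2 → ℕ),
      ∑ B ∈ π.parts, ∑ j ∈ B, g j = ∑ j, g j := by
    intro π g
    have h := Finset.sum_biUnion (s := π.parts) (t := id) (f := g)
      π.supIndep.pairwiseDisjoint
    rw [π.biUnion_parts] at h
    simpa using h.symm
  have hgR : ∀ B : Finset (Fin (2 * k) ⊕ Fin 2),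
      ∑ j ∈ B, (Sum.elim (fun _ => 0) (fun _ => 1) j : ℕ) = B.toRight.card := by
    intro B
    conv_lhs => rw [← B.toLeft_disjSum_toRight]
    rw [Finset.sum_disjSum]; simp
  have hgL : ∀ B : Finset (Fin (2 * k) ⊕ Fin 2),
      ∑ j ∈ B, (Sum.elim (fun _ => 1) (fun _ => 0) j : ℕ) = B.toLeft.card := by
    intro B
    conv_lhs => rw [← B.toLeft_disjSum_toRight]
    rw [Finset.sum_disjSum]; simp
  constructor
  · rintro ⟨π, B₀, hB₀, heq⟩
    simp only [key] at heq
    -- the erase is nonempty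
    have hEne : (π.parts.erase B₀).Nonempty := by
      rw [Finset.nonempty_iff_ne_empty]
      intro h
      rw [h, Finset.sum_empty] at heq
      exact absurd (MvPolynomial.monomial_eq_zero.1 heq) (hcpos B₀).ne'
    obtain ⟨B₁, hB₁⟩ := hEne
    have hB₁mem : B₁ ∈ π.parts := Finset.mem_of_mem_erase hB₁
    have hB₁ne : B₁ ≠ B₀ := Finset.ne_of_mem_erase hB₁
    -- every other block has the same exponent vector
    have hstep : ∀ B ∈ π.parts.erase B₀, d B = d B₀ := by
      intro B hB
      have hco := congrArg (MvPolynomial.coeff (d B)) heq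
      rw [MvPolynomial.coeff_monomial, MvPolynomial.coeff_sum] at hco
      simp only [MvPolynomial.coeff_monomial] at hco
      have hpos : 0 < ∑ B' ∈ π.parts.erase B₀, if d B' = d B then c B' else 0 := by
        apply Finset.sum_pos' (fun B' _ => by positivity)
        exact ⟨B, hB, by simp [hcpos B]⟩
      rw [← hco] at hpos
      by_contra hcon
      rw [if_neg (fun hcc => hcon hcc.symm)] at hpos
      exact lt_irrefl 0 hpos
    have hqeq : ∀ B ∈ π.parts, B.toRight.card = B₀.toRight.card := by
      intro B hB
      rcases eq_or_ne B B₀ with h | h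
      · rw [h]
      · have h1 := hstep B (Finset.mem_erase.2 ⟨h, hB⟩)
        have h2 := DFunLike.congr_fun h1 1
        simpa [hd, Finsupp.single_apply] using h2
    have hq2 : π.parts.card * B₀.toRight.card = 2 := by
      have h := hsum π (Sum.elim (fun _ => 0) (fun _ => 1))
      simp only [hgR] at h
      rw [Finset.sum_congr rfl hqeq, Finset.sum_const, smul_eq_mul] at h
      rw [h]
      have huniv : (Finset.univ : Finset (Fin (2 * k) ⊕ Fin 2)).toRight = Finset.univ := by
        ext x; simp
      rw [huniv, Finset.card_univ]
      simp
    have hcard2 : 2 ≤ π.parts.card :=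
      Finset.one_lt_card.2 ⟨B₀, hB₀, B₁, hB₁mem, fun h => hB₁ne h.symm⟩
    have hq1 : B₀.toRight.card = 1 := by
      by_contra h
      have h0 : B₀.toRight.card ≠ 0 := by
        intro h0; rw [h0, mul_zero] at hq2; omega
      have h2 : 2 ≤ B₀.toRight.card := by omega
      nlinarith
    have hpc : π.parts.card = 2 := by rw [hq1, mul_one] at hq2; exact hq2
    have hcardE : (π.parts.erase B₀).card = 1 := by
      rw [Finset.card_erase_of_mem hB₀, hpc]
    have hE : π.parts.erase B₀ = {B₁} := by
      obtain ⟨y, hy⟩ := Finset.card_eq_one.1 hcardE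
      rw [hy] at hB₁ ⊢
      simp only [Finset.mem_singleton] at hB₁
      rw [hB₁]
    have hpartseq : π.parts = {B₀, B₁} := by
      rw [← Finset.insert_erase hB₀, hE]
    rw [hE, Finset.sum_singleton] at heq
    have hd01 : d B₁ = d B₀ := hstep B₁ hB₁
    rw [hd01] at heq
    have hceq : c B₀ = c B₁ := by
      have h := congrArg (MvPolynomial.coeff (d B₀)) heq
      simpa [MvPolynomial.coeff_monomial] using h
    have hpeq : B₁.toLeft.card = B₀.toLeft.card := by
      have h := DFunLike.congr_fun hd01 0
      simpa [hd, Finsupp.single_apply] using h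
    have hp2k : B₀.toLeft.card + B₁.toLeft.card = 2 * k := by
      have h := hsum π (Sum.elim (fun _ => 1) (fun _ => 0))
      simp only [hgL] at h
      rw [hpartseq, Finset.sum_insert (by simp [hB₁ne.symm]), Finset.sum_singleton] at h
      rw [h]
      have huniv : (Finset.univ : Finset (Fin (2 * k) ⊕ Fin 2)).toLeft = Finset.univ := by
        ext x; simp
      rw [huniv, Finset.card_univ]
      simp
    refine ⟨B₀.toLeft, by omega, ?_⟩
    have hcompl : B₀.toLeftᶜ = B₁.toLeft := by
      ext i
      have hmem : Sum.inl i ∈ B₀ ∨ Sum.inl i ∈ B₁ := by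
        have h : (Sum.inl i : Fin (2 * k) ⊕ Fin 2) ∈ π.parts.biUnion id := by
          rw [π.biUnion_parts]; exact Finset.mem_univ _
        rw [hpartseq] at h
        simpa using h
      have hdisj : Disjoint B₀ B₁ :=
        π.disjoint hB₀ hB₁mem (fun h => hB₁ne h.symm)
      simp only [Finset.mem_compl, Finset.mem_toLeft]
      constructor
      · intro h; tauto
      · intro h h'
        exact Finset.disjoint_left.1 hdisj h' h
    simp only [hc] at hceq
    rw [← hcompl] at hceq
    have hfin : ((∏ i ∈ B₀.toLeft, a i : ℕ) : ℤ) = ((∏ i ∈ B₀.toLeftᶜ, a i : ℕ) : ℤ) := by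
      push_cast
      exact hceq
    exact_mod_cast hfin
  · rintro ⟨S, hScard, hSprod⟩
    set B₀ : Finset (Fin (2 * k) ⊕ Fin 2) := S.disjSum {0} with hB₀def
    set B₁ : Finset (Fin (2 * k) ⊕ Fin 2) := Sᶜ.disjSum {1} with hB₁def
    have hne : B₀ ≠ B₁ := by
      intro h
      have h0 : (Sum.inr 0 : Fin (2 * k) ⊕ Fin 2) ∈ B₀ := by simp [hB₀def]
      rw [h] at h0
      simp [hB₁def] at h0
    have hdisj : Disjoint B₀ B₁ := by
      rw [Finset.disjoint_left]
      rintro (i | j) h h'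
      · simp [hB₀def, hB₁def] at h h'
        exact h' h
      · simp [hB₀def, hB₁def] at h h'
        rw [h] at h'
        exact absurd h' (by decide)
    have hsupIndep : ({B₀, B₁} : Finset _).SupIndep id :=
      (Finset.supIndep_pair hne).2 hdisj
    have hsup : ({B₀, B₁} : Finset _).sup id = (Finset.univ : Finset (Fin (2 * k) ⊕ Fin 2)) := by
      rw [Finset.sup_insert, Finset.sup_singleton, id]
      apply Finset.eq_univ_iff_forall.2
      rintro (i | j)
      · simp only [Finset.sup_eq_union, Finset.mem_union]
        by_cases h : i ∈ S
        · left; simp [hB₀def, h]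
        · right; simp [hB₁def, h]
      · simp only [Finset.sup_eq_union, Finset.mem_union]
        rcases (by omega : j = 0 ∨ j = 1) with h | h
        · left; simp [hB₀def, h]
        · right; simp [hB₁def, h]
    have hbot : ⊥ ∉ ({B₀, B₁} : Finset (Finset (Fin (2 * k) ⊕ Fin 2))) := by
      intro h
      rw [Finset.mem_insert, Finset.mem_singleton] at h
      rcases h with h | h
      · have h0 : (Sum.inr 0 : Fin (2 * k) ⊕ Fin 2) ∈ B₀ := by simp [hB₀def]
        rw [← h] at h0; simp at h0
      · have h0 : (Sum.inr 1 : Fin (2 * k) ⊕ Fin 2) ∈ B₁ := by simp [hB₁def]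
        rw [← h] at h0; simp at h0
    refine ⟨⟨{B₀, B₁}, hsupIndep, hsup, hbot⟩, B₀, Finset.mem_insert_self _ _, ?_⟩
    show ∏ j ∈ B₀, v j = ∑ B ∈ ({B₀, B₁} : Finset _).erase B₀, ∏ j ∈ B, v j
    rw [show ({B₀, B₁} : Finset _).erase B₀ = {B₁} from by
        rw [show ({B₀, B₁} : Finset _) = insert B₀ {B₁} from rfl,
          Finset.erase_insert (by simpa using hne)],
      Finset.sum_singleton, key, key]
    have hSc : Sᶜ.card = k := by
      have h := Finset.card_compl S
      simp at h
      omega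
    have hcc : c B₀ = c B₁ := by
      simp only [hc, hB₀def, hB₁def, Finset.toLeft_disjSum]
      exact_mod_cast congrArg (Nat.cast : ℕ → ℤ) hSprod
    have hdd : d B₀ = d B₁ := by
      simp only [hd, hB₀def, hB₁def, Finset.toLeft_disjSum, Finset.toRight_disjSum,
        hScard, hSc, Finset.card_singleton]
    rw [hcc, hdd]
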